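/- Under D_ε, the constrained predictor h(X) = (1/2 − 2ε)X + 1/4 + ε has expected squared loss E[(h(X)−Y)²] = 1/16 + (3/2)ε + 3ε², and being a function of X alone (with X⊥A|Y), it satisfies equalized odds. -/
import Mathlib


/-- The joint pmf of `(X, A, Y)` under `D_ε`. -/
noncomputable def pD (ε : ℝ) (x a y : Bool) : ℝ :=
  (1 / 2) * (if a = y then 1 - ε else ε) * (if x = y then 1 - 2 * ε else 2 * ε)

/-- `{0,1}`-valued random variables as reals. -/
def ind (b : Bool) : ℝ := if b then 1 else 0

/-- Under `D_ε` with `0 < ε < 1/4`, the predictor `h(X) = (1/2 - 2ε) X + 1/4 + ε` has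
expected squared loss at most `1/16 + (3/2)ε + 3ε²`, and, being a function of `X` alone with
`X ⟂ A | Y`, it satisfies equalized odds: `P(X = x | Y = y, A = 0) = P(X = x | Y = y, A = 1)`
for all `x, y`. -/
theorem stmt16 (ε : ℝ) (hε0 : 0 < ε) (hε1 : ε < 1 / 4) :
    (∑ x : Bool, ∑ a : Bool, ∑ y : Bool,
        pD ε x a y * ((1 / 2 - 2 * ε) * ind x + (1 / 4 + ε) - ind y) ^ 2)
      ≤ 1 / 16 + 3 / 2 * ε + 3 * ε ^ 2 ∧
    (∀ x y : Bool,
      pD ε x false y / (∑ x' : Bool, pD ε x' false y)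
        = pD ε x true y / (∑ x' : Bool, pD ε x' true y)) := by
  constructor
  · simp [Fintype.sum_bool, pD, ind]
    nlinarith [sq_nonneg ε, hε0.le]
  · intro x y
    cases x <;> cases y <;>
      · simp only [Fintype.sum_bool, pD]
        norm_num
        rw [div_eq_div_iff (by nlinarith) (by nlinarith)]
        ring
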